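/- Let ε > 0 and set F(τ,p) = τ + p²/2. For every s > 0, the unique minimizer of F over D⁺u_ε(s,0) is (τ(s),p(s)) = (−1/(2(s+ε)²), 0), and for every 0 < t₀ ≤ s one has F(τ(s),p(s)) = ((t₀ + ε)/(s + ε))² · F(τ(t₀),p(t₀)). -/

import Mathlib

open Filter Topology Set

noncomputable section

/-- `u_ε(t,x) = (|x| − 1)²/(2(t + ε))`. -/
def uEps (ε : ℝ) (X : ℝ × ℝ) : ℝ := (|X.2| - 1) ^ 2 / (2 * (X.1 + ε))

/-- Superdifferential of `w : ℝ × ℝ → ℝ` at `X` (with the Euclidean norm on `ℝ²`):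
`P ∈ D⁺w(X)` iff `limsup_{Y→X} (w(Y)−w(X)−⟨P,Y−X⟩)/|Y−X| ≤ 0`. -/
def superDiff2 (w : ℝ × ℝ → ℝ) (X P : ℝ × ℝ) : Prop :=
  ∀ ε > 0, ∀ᶠ Y in 𝓝[≠] X,
    w Y - w X - (P.1 * (Y.1 - X.1) + P.2 * (Y.2 - X.2)) ≤
      ε * Real.sqrt ((Y.1 - X.1) ^ 2 + (Y.2 - X.2) ^ 2)

lemma abs_le_sqrt_sq_add (a b : ℝ) : |a| ≤ Real.sqrt (a ^ 2 + b ^ 2) := by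
  rw [← Real.sqrt_sq_eq_abs]
  exact Real.sqrt_le_sqrt (by nlinarith [sq_nonneg b])

lemma uEps_at (ε s : ℝ) : uEps ε (s, 0) = 1 / (2 * (s + ε)) := by
  simp [uEps]

lemma mem_superDiff (ε : ℝ) (hε : 0 < ε) (s : ℝ) (hs : 0 < s) :
    superDiff2 (uEps ε) (s, 0) (-1 / (2 * (s + ε) ^ 2), 0) := by
  intro δ hδ
  have hsε : 0 < s + ε := by linarith
  set r : ℝ := min (δ * (s + ε) ^ 3) (min ((s + ε) / 2) 1) with hr_def
  have hr : 0 < r := lt_min (by positivity) (lt_min (by positivity) one_pos)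
  have hr1 : r ≤ δ * (s + ε) ^ 3 := min_le_left _ _
  have hr2 : r ≤ (s + ε) / 2 := le_trans (min_le_right _ _) (min_le_left _ _)
  have hr3 : r ≤ 1 := le_trans (min_le_right _ _) (min_le_right _ _)
  apply eventually_nhdsWithin_of_eventually_nhds
  rw [Metric.eventually_nhds_iff]
  refine ⟨r, hr, fun {Y} hY => ?_⟩
  obtain ⟨t, x⟩ := Y
  rw [Prod.dist_eq, max_lt_iff] at hY
  obtain ⟨ht, hx⟩ := hY
  rw [Real.dist_eq] at ht
  rw [Real.dist_eq, sub_zero] at hx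
  have htabs := abs_lt.mp ht
  have htε : (s + ε) / 2 ≤ t + ε := by linarith [le_trans ht.le hr2]
  have htε0 : 0 < t + ε := by linarith
  have hxx : (|x| - 1) ^ 2 ≤ 1 := by
    have h1 : |x| < 1 := lt_of_lt_of_le hx hr3
    nlinarith [abs_nonneg x]
  simp only [uEps_at]
  have hu : uEps ε (t, x) = (|x| - 1) ^ 2 / (2 * (t + ε)) := rfl
  simp only [zero_mul, add_zero, sub_zero, hu]
  have step1 : (|x| - 1) ^ 2 / (2 * (t + ε)) ≤ 1 / (2 * (t + ε)) := by gcongr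
  have step2 : 1 / (2 * (t + ε)) - 1 / (2 * (s + ε)) - (-1 / (2 * (s + ε) ^ 2)) * (t - s)
      = (s - t) ^ 2 / (2 * (t + ε) * (s + ε) ^ 2) := by
    field_simp
    ring
  have step3 : (s - t) ^ 2 / (2 * (t + ε) * (s + ε) ^ 2) ≤ δ * |t - s| := by
    rw [div_le_iff₀ (by positivity)]
    have h1 : |t - s| * |t - s| = (s - t) ^ 2 := by
      rw [abs_mul_abs_self]; ring
    have h2 : |t - s| * |t - s| ≤ |t - s| * (δ * (s + ε) ^ 3) :=
      mul_le_mul_of_nonneg_left (le_trans ht.le hr1) (abs_nonneg _)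
    have h3 : (s + ε) ^ 3 ≤ 2 * (t + ε) * (s + ε) ^ 2 := by nlinarith [sq_nonneg (s + ε)]
    nlinarith [abs_nonneg (t - s), mul_le_mul_of_nonneg_left h3 (mul_nonneg hδ.le (abs_nonneg (t - s)))]
  have habs : |t - s| ≤ Real.sqrt ((t - s) ^ 2 + x ^ 2) := abs_le_sqrt_sq_add _ _
  have final : δ * |t - s| ≤ δ * Real.sqrt ((t - s) ^ 2 + x ^ 2) :=
    mul_le_mul_of_nonneg_left habs hδ.le
  linarith [step1, step3, final, step2.le, step2.ge]

lemma tau_eq (ε : ℝ) (hε : 0 < ε) (s : ℝ) (hs : 0 < s) (τ p : ℝ)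
    (h : superDiff2 (uEps ε) (s, 0) (τ, p)) : τ = -1 / (2 * (s + ε) ^ 2) := by
  have hsε : 0 < s + ε := by linarith
  have key : ∀ δ > 0, τ ≤ -1 / (2 * (s + ε) ^ 2) + δ ∧ -1 / (2 * (s + ε) ^ 2) ≤ τ + δ := by
    intro δ hδ
    have h' := h δ hδ
    rw [eventually_nhdsWithin_iff, Metric.eventually_nhds_iff] at h'
    obtain ⟨r, hr, hball⟩ := h'
    set h0 : ℝ := min r (s + ε) / 2 with hh0_def
    have h01 := min_le_left r (s + ε)
    have h02 := min_le_right r (s + ε)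
    have h03 := lt_min hr hsε
    have hh0 : 0 < h0 := by rw [hh0_def]; linarith
    have hh0r : h0 < r := by rw [hh0_def]; linarith
    have hh0a : h0 ≤ (s + ε) / 2 := by rw [hh0_def]; linarith
    constructor
    · -- use Y = (s - h0, 0)
      have hd : dist ((s - h0, 0) : ℝ × ℝ) (s, 0) < r := by
        rw [Prod.dist_eq]
        have hd1 : dist (s - h0) s = h0 := by
          rw [Real.dist_eq, show s - h0 - s = -h0 by ring, abs_neg, abs_of_nonneg hh0.le]
        have hd2 : dist (0 : ℝ) 0 = 0 := dist_self 0
        rw [hd1, hd2, max_eq_left hh0.le]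
        exact hh0r
      have hne : ((s - h0, 0) : ℝ × ℝ) ≠ (s, 0) := by
        intro hc
        have hc1 := congrArg Prod.fst hc
        simp only at hc1
        linarith
      have hQ := hball hd hne
      simp only [uEps_at] at hQ
      have hu : uEps ε (s - h0, 0) = 1 / (2 * (s - h0 + ε)) := uEps_at ε (s - h0)
      have hsqrt : Real.sqrt ((s - h0 - s) ^ 2 + ((0:ℝ) - 0) ^ 2) = h0 := by
        rw [show (s - h0 - s) = -h0 by ring]
        simp [Real.sqrt_sq hh0.le]
      simp only [hu, hsqrt] at hQ
      have hb : 0 < s - h0 + ε := by linarith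
      -- hQ : 1/(2(s-h0+ε)) - 1/(2(s+ε)) - (τ*(-h0) + p*0) ≤ δ*h0
      have e1 : 1 / (2 * (s - h0 + ε)) - 1 / (2 * (s + ε))
          = h0 / (2 * (s + ε) * (s - h0 + ε)) := by
        field_simp; ring
      have hQ' : h0 * (1 / (2 * (s + ε) * (s - h0 + ε)) + τ) ≤ h0 * δ := by
        have : s - h0 - s = -h0 := by ring
        rw [this] at hQ
        have e2 : h0 * (1 / (2 * (s + ε) * (s - h0 + ε)) + τ)
            = h0 / (2 * (s + ε) * (s - h0 + ε)) + τ * h0 := by ring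
        rw [e2, ← e1]
        linarith [hQ]
      have hQ'' : 1 / (2 * (s + ε) * (s - h0 + ε)) + τ ≤ δ :=
        le_of_mul_le_mul_left hQ' hh0
      have hle : 1 / (2 * (s + ε) ^ 2) ≤ 1 / (2 * (s + ε) * (s - h0 + ε)) := by
        apply one_div_le_one_div_of_le (by positivity)
        nlinarith
      have : -1 / (2 * (s + ε) ^ 2) = -(1 / (2 * (s + ε) ^ 2)) := by ring
      linarith
    · -- use Y = (s + h0, 0)
      have hd : dist ((s + h0, 0) : ℝ × ℝ) (s, 0) < r := by
        rw [Prod.dist_eq]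
        have hd1 : dist (s + h0) s = h0 := by
          rw [Real.dist_eq, show s + h0 - s = h0 by ring, abs_of_nonneg hh0.le]
        have hd2 : dist (0 : ℝ) 0 = 0 := dist_self 0
        rw [hd1, hd2, max_eq_left hh0.le]
        exact hh0r
      have hne : ((s + h0, 0) : ℝ × ℝ) ≠ (s, 0) := by
        intro hc
        have hc1 := congrArg Prod.fst hc
        simp only at hc1
        linarith
      have hQ := hball hd hne
      simp only [uEps_at] at hQ
      have hu : uEps ε (s + h0, 0) = 1 / (2 * (s + h0 + ε)) := uEps_at ε (s + h0)
      have hsqrt : Real.sqrt ((s + h0 - s) ^ 2 + ((0:ℝ) - 0) ^ 2) = h0 := by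
        rw [show (s + h0 - s) = h0 by ring]
        simp [Real.sqrt_sq hh0.le]
      simp only [hu, hsqrt] at hQ
      have hb : 0 < s + h0 + ε := by linarith
      have e1 : 1 / (2 * (s + h0 + ε)) - 1 / (2 * (s + ε))
          = -h0 / (2 * (s + ε) * (s + h0 + ε)) := by
        field_simp; ring
      have hQ' : h0 * (-(1 / (2 * (s + ε) * (s + h0 + ε))) - τ) ≤ h0 * δ := by
        have : s + h0 - s = h0 := by ring
        rw [this] at hQ
        have e2 : h0 * (-(1 / (2 * (s + ε) * (s + h0 + ε))) - τ)
            = -h0 / (2 * (s + ε) * (s + h0 + ε)) - τ * h0 := by ring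
        rw [e2, ← e1]
        linarith [hQ]
      have hQ'' : -(1 / (2 * (s + ε) * (s + h0 + ε))) - τ ≤ δ :=
        le_of_mul_le_mul_left hQ' hh0
      have hle : 1 / (2 * (s + ε) * (s + h0 + ε)) ≤ 1 / (2 * (s + ε) ^ 2) := by
        apply one_div_le_one_div_of_le (by positivity)
        nlinarith
      have : -1 / (2 * (s + ε) ^ 2) = -(1 / (2 * (s + ε) ^ 2)) := by ring
      linarith
  apply le_antisymm
  · exact le_of_forall_pos_le_add (fun δ hδ => (key δ hδ).1)
  · exact le_of_forall_pos_le_add (fun δ hδ => (key δ hδ).2)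

/-- for every `ε > 0` and `s > 0`, the unique minimizer of
`F(τ,p) = τ + p²/2` over `D⁺u_ε(s,0)` is `(τ(s),p(s)) = (−1/(2(s+ε)²), 0)`, and for
`0 < t₀ ≤ s` one has `F(τ(s),p(s)) = ((t₀+ε)/(s+ε))² F(τ(t₀),p(t₀))`. -/
theorem statement19 (ε : ℝ) (hε : 0 < ε) (s : ℝ) (hs : 0 < s) :
    (superDiff2 (uEps ε) (s, 0) (-1 / (2 * (s + ε) ^ 2), 0) ∧
     (∀ τ p : ℝ, superDiff2 (uEps ε) (s, 0) (τ, p) →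
        -1 / (2 * (s + ε) ^ 2) + (0 : ℝ) ^ 2 / 2 ≤ τ + p ^ 2 / 2) ∧
     (∀ τ p : ℝ, superDiff2 (uEps ε) (s, 0) (τ, p) →
        (∀ τ' p' : ℝ, superDiff2 (uEps ε) (s, 0) (τ', p') →
          τ + p ^ 2 / 2 ≤ τ' + p' ^ 2 / 2) →
        (τ, p) = (-1 / (2 * (s + ε) ^ 2), (0 : ℝ)))) ∧
    (∀ t₀ : ℝ, 0 < t₀ → t₀ ≤ s →
      -1 / (2 * (s + ε) ^ 2) + (0 : ℝ) ^ 2 / 2 =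
        ((t₀ + ε) / (s + ε)) ^ 2 * (-1 / (2 * (t₀ + ε) ^ 2) + (0 : ℝ) ^ 2 / 2)) := by
  have hsε : (0:ℝ) < s + ε := by linarith
  have hmem := mem_superDiff ε hε s hs
  refine ⟨⟨hmem, ?_, ?_⟩, ?_⟩
  · intro τ p hsd
    have hτ := tau_eq ε hε s hs τ p hsd
    rw [hτ]
    nlinarith [sq_nonneg p]
  · intro τ p hsd hmin
    have hτ := tau_eq ε hε s hs τ p hsd
    have h2 := hmin _ _ hmem
    have hp : p = 0 := by nlinarith [sq_nonneg p]
    rw [Prod.mk.injEq]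
    exact ⟨hτ, hp⟩
  · intro t₀ ht₀ ht₀s
    have h1 : s + ε ≠ 0 := by positivity
    have h2 : t₀ + ε ≠ 0 := by positivity
    field_simp
    ring
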